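/- Let h: ℝ^N → ℝ be differentiable and μ-strongly convex with L-Lipschitz gradient, and let 𝐁 be a symmetric positive semidefinite N×N matrix with largest eigenvalue λ_max > 0 and smallest nonzero eigenvalue λ₊ > 0. Suppose (y*, λ*) satisfies ∇h(y*) + 𝐁λ* = 0 and 𝐁y* = 0, let 0 < κ < min(1/L, μ/λ_max²), and let (y, λ) be such that λ − λ* is orthogonal to the kernel of 𝐁. Define y⁺ = y − κ(𝐁λ + ∇h(y)) and λ⁺ = λ + κ𝐁y⁺. Then (1 − κ²λ_max²)‖y⁺ − y*‖² + ‖λ⁺ − λ*‖² ≤ γ₀ [(1 − κ²λ_max²)‖y − y*‖² + ‖λ − λ*‖²], where γ₀ = max(1 − κμ(1 − κL), 1 − κ²λ₊²) ∈ [0, 1). -/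

import Mathlib

open scoped RealInnerProductSpace

section Aux

variable {E : Type*} [NormedAddCommGroup E] [InnerProductSpace ℝ E] [CompleteSpace E]

private lemma line_hasDerivAt {f : E → ℝ} {g : E → E}
    (hg : ∀ x, HasGradientAt f (g x) x) (a v : E) (t : ℝ) :
    HasDerivAt (fun s : ℝ => f (a + s • v)) ⟪g (a + t • v), v⟫ t := by
  have h1 : HasDerivAt (fun s : ℝ => a + s • v) v t := by
    simpa using ((hasDerivAt_id t).smul_const v).const_add a
  have h2 : HasFDerivAt f (InnerProductSpace.toDual ℝ E (g (a + t • v))) (a + t • v) :=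
    hasGradientAt_iff_hasFDerivAt.1 (hg _)
  have h3 := h2.comp_hasDerivAt t h1
  have h4 := h3
  simp only [InnerProductSpace.toDual_apply_apply] at h4
  exact h4

private lemma grad_ineq {f : E → ℝ} {g : E → E} (hconv : ConvexOn ℝ Set.univ f)
    (hg : ∀ x, HasGradientAt f (g x) x) (x z : E) :
    ⟪g x, z - x⟫ ≤ f z - f x := by
  have hd : HasDerivAt (fun s : ℝ => f (x + s • (z - x))) ⟪g x, z - x⟫ 0 := by
    simpa using line_hasDerivAt hg x (z - x) 0
  have hslope : Filter.Tendsto (slope (fun s : ℝ => f (x + s • (z - x))) 0)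
      (nhdsWithin 0 (Set.Ioi 0)) (nhds ⟪g x, z - x⟫) :=
    (hasDerivAt_iff_tendsto_slope.1 hd).mono_left
      (nhdsWithin_mono 0 fun t ht => Set.mem_compl_singleton_iff.2 (ne_of_gt ht))
  refine le_of_tendsto hslope ?_
  filter_upwards [Ioo_mem_nhdsGT_of_mem (Set.left_mem_Ico.2 one_pos)] with t ht
  have hcc := hconv.2 (Set.mem_univ z) (Set.mem_univ x) ht.1.le
    (by linarith [ht.2] : (0:ℝ) ≤ 1 - t) (by ring)
  have hxt : x + t • (z - x) = t • z + (1 - t) • x := by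
    rw [smul_sub, sub_smul, one_smul]; abel
  rw [slope_def_field]
  have h0 : x + (0:ℝ) • (z - x) = x := by simp
  rw [h0, sub_zero, div_le_iff₀ ht.1, hxt]
  have := hcc
  simp only [smul_eq_mul] at this
  nlinarith [this]

private lemma descent_lemma {f : E → ℝ} {g : E → E} (hg : ∀ x, HasGradientAt f (g x) x)
    {L : ℝ} (hL : 0 < L) (hlip : ∀ x y, ‖g x - g y‖ ≤ L * ‖x - y‖) (a b : E) :
    f b ≤ f a + ⟪g a, b - a⟫ + L / 2 * ‖b - a‖ ^ 2 := by
  set v := b - a with hv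
  set ψ : ℝ → ℝ := fun t => f (a + t • v) - t * ⟪g a, v⟫ - L * t ^ 2 / 2 * ‖v‖ ^ 2 with hψ
  have hψd : ∀ t : ℝ, HasDerivAt ψ (⟪g (a + t • v), v⟫ - ⟪g a, v⟫ - L * t * ‖v‖ ^ 2) t := by
    intro t
    have h1 := line_hasDerivAt hg a v t
    have h2 : HasDerivAt (fun t : ℝ => t * ⟪g a, v⟫) ⟪g a, v⟫ t := by
      simpa using (hasDerivAt_id t).mul_const ⟪g a, v⟫
    have h3 : HasDerivAt (fun t : ℝ => L * t ^ 2 / 2 * ‖v‖ ^ 2) (L * t * ‖v‖ ^ 2) t := by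
      have h4 := (((hasDerivAt_pow 2 t).const_mul L).div_const 2).mul_const (‖v‖ ^ 2)
      exact h4.congr_deriv (by rw [show (2:ℕ) - 1 = 1 from rfl]; push_cast; ring)
    exact (h1.sub h2).sub h3
  have hanti : AntitoneOn ψ (Set.Icc (0:ℝ) 1) := by
    apply antitoneOn_of_deriv_nonpos (convex_Icc 0 1)
    · exact fun t _ => ((hψd t).continuousAt).continuousWithinAt
    · intro t _
      exact ((hψd t).differentiableAt).differentiableWithinAt
    · intro t ht
      rw [interior_Icc] at ht
      rw [(hψd t).deriv]
      have hb1 : ⟪g (a + t • v) - g a, v⟫ ≤ ‖g (a + t • v) - g a‖ * ‖v‖ :=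
        real_inner_le_norm _ _
      have hb2 : ‖g (a + t • v) - g a‖ ≤ L * (t * ‖v‖) := by
        have h5 := hlip (a + t • v) a
        have h6 : a + t • v - a = t • v := by abel
        rw [h6, norm_smul, Real.norm_eq_abs, abs_of_pos ht.1] at h5
        exact h5
      have hsub : ⟪g (a + t • v), v⟫ - ⟪g a, v⟫ = ⟪g (a + t • v) - g a, v⟫ :=
        (inner_sub_left _ _ _).symm
      rw [sub_sub, ← sub_sub, hsub]
      nlinarith [norm_nonneg v, norm_nonneg (g (a + t • v) - g a)]
  have hm := hanti (Set.left_mem_Icc.2 zero_le_one) (Set.right_mem_Icc.2 zero_le_one) zero_le_one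
  have e0 : ψ 0 = f a := by simp [hψ]
  have hab : a + v = b := by rw [hv]; abel
  have e1 : ψ 1 = f b - ⟪g a, v⟫ - L / 2 * ‖v‖ ^ 2 := by
    show f (a + (1:ℝ) • v) - 1 * ⟪g a, v⟫ - L * 1 ^ 2 / 2 * ‖v‖ ^ 2
      = f b - ⟪g a, v⟫ - L / 2 * ‖v‖ ^ 2
    rw [one_smul, hab]
    ring
  rw [e0, e1] at hm
  linarith

private lemma coco {f : E → ℝ} {g : E → E} (hconv : ConvexOn ℝ Set.univ f)
    (hg : ∀ x, HasGradientAt f (g x) x) {L : ℝ} (hL : 0 < L)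
    (hlip : ∀ x y, ‖g x - g y‖ ≤ L * ‖x - y‖) (x y : E) :
    ‖g x - g y‖ ^ 2 ≤ L * ⟪g x - g y, x - y⟫ := by
  have key : ∀ p q : E, ⟪g q, p - q⟫ + 1 / (2 * L) * ‖g p - g q‖ ^ 2 ≤ f p - f q := by
    intro p q
    set z := p - (1 / L) • (g p - g q) with hz
    have h1 := grad_ineq hconv hg q z
    have h2 := descent_lemma hg hL hlip p z
    have e1 : z - q = (p - q) - (1 / L) • (g p - g q) := by rw [hz]; abel
    have e2 : z - p = -((1 / L) • (g p - g q)) := by rw [hz]; abel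
    rw [e1, inner_sub_right, real_inner_smul_right] at h1
    rw [e2, inner_neg_right, real_inner_smul_right, norm_neg, norm_smul,
      Real.norm_eq_abs, abs_of_pos (by positivity : (0:ℝ) < 1 / L)] at h2
    have hgpq : ⟪g p, g p - g q⟫ - ⟪g q, g p - g q⟫ = ‖g p - g q‖ ^ 2 := by
      rw [← inner_sub_left, real_inner_self_eq_norm_sq]
    have hfrac : (1 / L) * ⟪g p, g p - g q⟫ - (1 / L) * ⟪g q, g p - g q⟫
        = (1 / L) * ‖g p - g q‖ ^ 2 := by rw [← mul_sub, hgpq]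
    have hsq : L / 2 * (1 / L * ‖g p - g q‖) ^ 2 = 1 / (2 * L) * ‖g p - g q‖ ^ 2 := by
      field_simp
    rw [hsq] at h2
    have hhalf : (1 / L) * ‖g p - g q‖ ^ 2 - 1 / (2 * L) * ‖g p - g q‖ ^ 2
        = 1 / (2 * L) * ‖g p - g q‖ ^ 2 := by
      field_simp
      ring
    linarith
  have k1 := key x y
  have k2 := key y x
  have e5 : ‖g y - g x‖ = ‖g x - g y‖ := norm_sub_rev _ _
  rw [e5] at k2
  have esum : ⟪g y, x - y⟫ + ⟪g x, y - x⟫ = -⟪g x - g y, x - y⟫ := by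
    have h7 : y - x = -(x - y) := by abel
    rw [h7, inner_neg_right, inner_sub_left]
    ring
  have hL2 : (0:ℝ) < 1 / (2 * L) := by positivity
  have hmain : (1 / L) * ‖g x - g y‖ ^ 2 ≤ ⟪g x - g y, x - y⟫ := by
    have : 2 * (1 / (2 * L)) = 1 / L := by field_simp
    nlinarith [k1, k2, esum]
  calc ‖g x - g y‖ ^ 2 = L * ((1 / L) * ‖g x - g y‖ ^ 2) := by field_simp
    _ ≤ L * ⟪g x - g y, x - y⟫ := mul_le_mul_of_nonneg_left hmain hL.le

private lemma strong_mono {f : E → ℝ} {g : E → E} {m : ℝ} (hm : 0 < m)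
    (hsc : StrongConvexOn Set.univ m f) (hg : ∀ x, HasGradientAt f (g x) x) (x y : E) :
    m * ‖x - y‖ ^ 2 ≤ ⟪g x - g y, x - y⟫ := by
  have hp : ConvexOn ℝ Set.univ fun z => f z - m / 2 * ‖z‖ ^ 2 := strongConvexOn_iff_convex.1 hsc
  have hgp : ∀ z : E, HasGradientAt (fun w => f w - m / 2 * ‖w‖ ^ 2) (g z - m • z) z := by
    intro z
    have hq : HasGradientAt (fun w : E => m / 2 * ‖w‖ ^ 2) (m • z) z := by
      rw [hasGradientAt_iff_hasFDerivAt]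
      have h1 : HasFDerivAt (fun w : E => ⟪w, w⟫)
          ((fderivInnerCLM ℝ (z, z)).comp
            ((ContinuousLinearMap.id ℝ E).prod (ContinuousLinearMap.id ℝ E))) z :=
        (hasFDerivAt_id z).inner ℝ (hasFDerivAt_id z)
      have h2 := h1.const_mul (m / 2)
      have h3 : (fun w : E => m / 2 * ⟪w, w⟫) = fun w : E => m / 2 * ‖w‖ ^ 2 := by
        funext w; rw [real_inner_self_eq_norm_sq]
      rw [h3] at h2
      refine h2.congr_fderiv ?_
      ext w
      simp only [InnerProductSpace.toDual_apply_apply, ContinuousLinearMap.coe_smul',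
        Pi.smul_apply, ContinuousLinearMap.coe_comp', Function.comp_apply,
        ContinuousLinearMap.prod_apply, ContinuousLinearMap.coe_id', id_eq,
        fderivInnerCLM_apply, smul_eq_mul, real_inner_smul_left]
      rw [real_inner_comm w z]
      ring
    rw [hasGradientAt_iff_hasFDerivAt, map_sub]
    exact (hasGradientAt_iff_hasFDerivAt.1 (hg z)).sub (hasGradientAt_iff_hasFDerivAt.1 hq)
  have h1 := grad_ineq hp hgp x y
  have h2 := grad_ineq hp hgp y x
  have expand : ⟪g x - m • x, y - x⟫ + ⟪g y - m • y, x - y⟫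
      = m * ‖x - y‖ ^ 2 - ⟪g x - g y, x - y⟫ := by
    have hn : ‖x - y‖ ^ 2 = ⟪x, x⟫ - ⟪x, y⟫ - ⟪y, x⟫ + ⟪y, y⟫ := by
      rw [← real_inner_self_eq_norm_sq, inner_sub_left, inner_sub_right, inner_sub_right]
      ring
    have h3 : y - x = -(x - y) := by abel
    rw [h3, inner_neg_right, hn]
    simp only [inner_sub_left, inner_sub_right, real_inner_smul_left]
    rw [real_inner_comm y x]
    ring
  linarith

end Aux

section Spectral

private lemma norm_sq_eq_sum' {N : ℕ}
    (b : OrthonormalBasis (Fin N) ℝ (EuclideanSpace ℝ (Fin N)))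
    (w : EuclideanSpace ℝ (Fin N)) : ‖w‖ ^ 2 = ∑ i, ⟪b i, w⟫ ^ 2 := by
  rw [← real_inner_self_eq_norm_sq, ← b.sum_inner_mul_inner w w]
  exact Finset.sum_congr rfl fun i _ => by rw [real_inner_comm w (b i), sq]

private lemma toEuclideanLin_eigen {N : ℕ} {B : Matrix (Fin N) (Fin N) ℝ}
    (hH : B.IsHermitian) (i : Fin N) :
    Matrix.toEuclideanLin B (hH.eigenvectorBasis i)
      = hH.eigenvalues i • hH.eigenvectorBasis i := by
  have h := hH.mulVec_eigenvectorBasis i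
  rw [Matrix.toEuclideanLin_apply, h]
  rfl

private lemma inner_eigen {N : ℕ} {B : Matrix (Fin N) (Fin N) ℝ}
    (hH : B.IsHermitian) (i : Fin N) (v : EuclideanSpace ℝ (Fin N)) :
    ⟪hH.eigenvectorBasis i, Matrix.toEuclideanLin B v⟫
      = hH.eigenvalues i * ⟪hH.eigenvectorBasis i, v⟫ := by
  have hsymm := Matrix.isHermitian_iff_isSymmetric.1 hH
  rw [← hsymm (hH.eigenvectorBasis i) v, toEuclideanLin_eigen hH i, real_inner_smul_left]

private lemma sq_norm_T_le {N : ℕ} {B : Matrix (Fin N) (Fin N) ℝ}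
    (hB : B.PosSemidef) {lamMax : ℝ} (hmax : ∀ μ' ∈ spectrum ℝ B, μ' ≤ lamMax)
    (v : EuclideanSpace ℝ (Fin N)) :
    ‖Matrix.toEuclideanLin B v‖ ^ 2 ≤ lamMax ^ 2 * ‖v‖ ^ 2 := by
  have hH := hB.1
  rw [norm_sq_eq_sum' hH.eigenvectorBasis (Matrix.toEuclideanLin B v),
    norm_sq_eq_sum' hH.eigenvectorBasis v, Finset.mul_sum]
  apply Finset.sum_le_sum
  intro i _
  rw [inner_eigen hH i v, mul_pow]
  have h1 : 0 ≤ hH.eigenvalues i := hB.eigenvalues_nonneg i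
  have h2 : hH.eigenvalues i ≤ lamMax := hmax _ (hH.eigenvalues_mem_spectrum_real i)
  have h3 : hH.eigenvalues i ^ 2 ≤ lamMax ^ 2 := by nlinarith
  exact mul_le_mul_of_nonneg_right h3 (sq_nonneg _)

private lemma sq_norm_T_ge {N : ℕ} {B : Matrix (Fin N) (Fin N) ℝ}
    (hB : B.PosSemidef) {lamPos : ℝ} (hpospos : 0 < lamPos)
    (hposmin : ∀ μ' ∈ spectrum ℝ B, μ' ≠ 0 → lamPos ≤ μ')
    (v : EuclideanSpace ℝ (Fin N))
    (horth : ∀ w : EuclideanSpace ℝ (Fin N), Matrix.toEuclideanLin B w = 0 → ⟪v, w⟫ = 0) :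
    lamPos ^ 2 * ‖v‖ ^ 2 ≤ ‖Matrix.toEuclideanLin B v‖ ^ 2 := by
  have hH := hB.1
  rw [norm_sq_eq_sum' hH.eigenvectorBasis (Matrix.toEuclideanLin B v),
    norm_sq_eq_sum' hH.eigenvectorBasis v, Finset.mul_sum]
  apply Finset.sum_le_sum
  intro i _
  rw [inner_eigen hH i v, mul_pow]
  by_cases h0 : hH.eigenvalues i = 0
  · have hz : Matrix.toEuclideanLin B (hH.eigenvectorBasis i) = 0 := by
      rw [toEuclideanLin_eigen hH i, h0, zero_smul]
    have hiv : ⟪v, hH.eigenvectorBasis i⟫ = 0 := horth _ hz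
    rw [real_inner_comm] at hiv
    rw [hiv]
    simp
  · have h1 := hposmin _ (hH.eigenvalues_mem_spectrum_real i) h0
    have h3 : lamPos ^ 2 ≤ hH.eigenvalues i ^ 2 := by nlinarith
    exact mul_le_mul_of_nonneg_right h3 (sq_nonneg _)

end Spectral

set_option maxHeartbeats 1600000 in
/-- one-step contraction of the fixed-step primal–dual iteration.
`h` is `μ`-strongly convex with `L`-Lipschitz gradient `gh`; `𝐁` is a symmetric PSD
matrix with largest eigenvalue `λ_max > 0` and smallest nonzero eigenvalue `λ₊ > 0`;
`(y*, λ*)` is a KKT pair (`∇h(y*) + 𝐁λ* = 0`, `𝐁y* = 0`);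
`0 < κ < min(1/L, μ/λ_max²)`; and `λ − λ*` is orthogonal to the kernel of `𝐁`.
With `y⁺ = y − κ(𝐁λ + ∇h(y))` and `λ⁺ = λ + κ𝐁y⁺`,
`(1 − κ²λ_max²)‖y⁺ − y*‖² + ‖λ⁺ − λ*‖² ≤ γ₀[(1 − κ²λ_max²)‖y − y*‖² + ‖λ − λ*‖²]`,
where `γ₀ = max(1 − κμ(1 − κL), 1 − κ²λ₊²) ∈ [0,1)`. -/
theorem primal_dual_one_step_contraction (N : ℕ) (μ L : ℝ) (hμ : 0 < μ) (hL : 0 < L)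
    (h : EuclideanSpace ℝ (Fin N) → ℝ) (hdiff : Differentiable ℝ h)
    (hsc : StrongConvexOn Set.univ μ h)
    (gh : EuclideanSpace ℝ (Fin N) → EuclideanSpace ℝ (Fin N))
    (hgrad : ∀ x, HasGradientAt h (gh x) x)
    (hlip : ∀ x y, ‖gh x - gh y‖ ≤ L * ‖x - y‖)
    (B : Matrix (Fin N) (Fin N) ℝ) (hBsym : B.IsSymm) (hBpsd : B.PosSemidef)
    (lamMax lamPos : ℝ)
    (hmaxmem : lamMax ∈ spectrum ℝ B)
    (hmax : ∀ μ' ∈ spectrum ℝ B, μ' ≤ lamMax) (hmaxpos : 0 < lamMax)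
    (hposmem : lamPos ∈ spectrum ℝ B) (hpospos : 0 < lamPos)
    (hposmin : ∀ μ' ∈ spectrum ℝ B, μ' ≠ 0 → lamPos ≤ μ')
    (ystar lstar : EuclideanSpace ℝ (Fin N))
    (hkkt1 : gh ystar + Matrix.toEuclideanLin B lstar = 0)
    (hkkt2 : Matrix.toEuclideanLin B ystar = 0)
    (κ : ℝ) (hκ0 : 0 < κ) (hκL : κ < 1 / L) (hκmax : κ < μ / lamMax ^ 2)
    (y lam : EuclideanSpace ℝ (Fin N))
    (horth : ∀ w : EuclideanSpace ℝ (Fin N),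
      Matrix.toEuclideanLin B w = 0 → ⟪lam - lstar, w⟫ = 0)
    (yplus lplus : EuclideanSpace ℝ (Fin N))
    (hyplus : yplus = y - κ • (Matrix.toEuclideanLin B lam + gh y))
    (hlplus : lplus = lam + κ • Matrix.toEuclideanLin B yplus)
    (γ₀ : ℝ) (hγ₀ : γ₀ = max (1 - κ * μ * (1 - κ * L)) (1 - κ ^ 2 * lamPos ^ 2)) :
    (0 ≤ γ₀ ∧ γ₀ < 1) ∧
    (1 - κ ^ 2 * lamMax ^ 2) * ‖yplus - ystar‖ ^ 2 + ‖lplus - lstar‖ ^ 2 ≤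
      γ₀ * ((1 - κ ^ 2 * lamMax ^ 2) * ‖y - ystar‖ ^ 2 + ‖lam - lstar‖ ^ 2) := by
  -- basic scalar facts
  have hκL1 : κ * L < 1 := by
    rw [lt_div_iff₀ hL] at hκL
    exact hκL
  have hκM : κ * lamMax ^ 2 < μ := by
    rw [lt_div_iff₀ (by positivity)] at hκmax
    exact hκmax
  -- N ≠ 0
  have hN : N ≠ 0 := by
    rintro rfl
    exact (spectrum.mem_iff.1 hmaxmem) (isUnit_of_subsingleton _)
  have hconv : ConvexOn ℝ Set.univ h := hsc.convexOn fun r => by positivity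
  -- μ ≤ L
  have hμL : μ ≤ L := by
    set x0 : EuclideanSpace ℝ (Fin N) := EuclideanSpace.single ⟨0, Nat.pos_of_ne_zero hN⟩ 1
      with hx0def
    have hx0 : ‖x0‖ = 1 := by
      rw [hx0def, EuclideanSpace.norm_single]
      norm_num
    have h1 := strong_mono hμ hsc hgrad x0 0
    have h2 := real_inner_le_norm (gh x0 - gh 0) (x0 - 0)
    have h3 := hlip x0 0
    rw [sub_zero] at h1 h2 h3
    rw [hx0] at h1 h2 h3
    simp only [one_pow, mul_one] at h1 h2 h3
    linarith [h1, h2, h3]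
  have hlamM : lamPos ≤ lamMax := hmax _ hposmem
  have hκμ : κ * μ < 1 := by
    have := mul_le_mul_of_nonneg_left hμL hκ0.le
    linarith
  have hM2 : κ ^ 2 * lamMax ^ 2 < 1 := by
    have := mul_lt_mul_of_pos_left hκM hκ0
    nlinarith [this, hκμ]
  -- γ₀ bounds
  have hγlt : γ₀ < 1 := by
    rw [hγ₀]
    apply max_lt
    · have : 0 < κ * μ * (1 - κ * L) := by
        apply mul_pos (mul_pos hκ0 hμ)
        linarith
      linarith
    · have : 0 < κ ^ 2 * lamPos ^ 2 := by positivity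
      linarith
  have hγ1 : 1 - κ * μ * (1 - κ * L) ≤ γ₀ := hγ₀ ▸ le_max_left _ _
  have hγ2 : 1 - κ ^ 2 * lamPos ^ 2 ≤ γ₀ := hγ₀ ▸ le_max_right _ _
  have hγ0 : 0 ≤ γ₀ := by
    refine le_trans ?_ hγ1
    have hq : (0:ℝ) ≤ κ ^ 2 * μ * L := by positivity
    nlinarith [hκμ, hq]
  refine ⟨⟨hγ0, hγlt⟩, ?_⟩
  -- vector abbreviations
  set ve := y - ystar with hve
  set vd := lam - lstar with hvd
  set vg := gh y - gh ystar with hvg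
  set ep := yplus - ystar with hepd
  set dp := lplus - lstar with hdpd
  have hTlstar : Matrix.toEuclideanLin B lstar = -gh ystar :=
    eq_neg_of_add_eq_zero_right hkkt1
  set u := Matrix.toEuclideanLin B vd + vg with hu
  have hep : ep = ve - κ • u := by
    rw [hepd, hyplus, hu, hvd, map_sub, hTlstar, hve, hvg]
    module
  have hdp : dp = vd + κ • Matrix.toEuclideanLin B ep := by
    rw [hdpd, hlplus, hepd, map_sub, hkkt2, sub_zero, hvd]
    abel
  -- expansions
  have A1 : ‖ep‖ ^ 2 = ‖ve‖ ^ 2 - 2 * κ * ⟪ve, u⟫ + κ ^ 2 * ‖u‖ ^ 2 := by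
    rw [hep, norm_sub_sq_real, real_inner_smul_right, norm_smul, Real.norm_eq_abs,
      mul_pow, sq_abs]
    ring
  have hsymmM := Matrix.isHermitian_iff_isSymmetric.1 hBpsd.1
  have A2 : ‖dp‖ ^ 2 = ‖vd‖ ^ 2 + 2 * κ * ⟪Matrix.toEuclideanLin B vd, ep⟫
      + κ ^ 2 * ‖Matrix.toEuclideanLin B ep‖ ^ 2 := by
    rw [hdp, norm_add_sq_real, real_inner_smul_right, norm_smul, Real.norm_eq_abs,
      mul_pow, sq_abs, ← hsymmM vd ep]
    ring
  have A3 : ⟪Matrix.toEuclideanLin B vd, ep⟫ = ⟪Matrix.toEuclideanLin B vd, ve⟫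
      - κ * (‖Matrix.toEuclideanLin B vd‖ ^ 2 + ⟪Matrix.toEuclideanLin B vd, vg⟫) := by
    rw [hep, inner_sub_right, real_inner_smul_right, hu, inner_add_right,
      real_inner_self_eq_norm_sq]
  have A4 : ⟪ve, u⟫ = ⟪Matrix.toEuclideanLin B vd, ve⟫ + ⟪ve, vg⟫ := by
    rw [hu, inner_add_right, real_inner_comm ve (Matrix.toEuclideanLin B vd)]
  have A5 : ‖u‖ ^ 2 = ‖Matrix.toEuclideanLin B vd‖ ^ 2
      + 2 * ⟪Matrix.toEuclideanLin B vd, vg⟫ + ‖vg‖ ^ 2 := by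
    rw [hu, norm_add_sq_real]
  -- bounds
  have BT1 : ‖Matrix.toEuclideanLin B ep‖ ^ 2 ≤ lamMax ^ 2 * ‖ep‖ ^ 2 :=
    sq_norm_T_le hBpsd hmax ep
  have BT2 : lamPos ^ 2 * ‖vd‖ ^ 2 ≤ ‖Matrix.toEuclideanLin B vd‖ ^ 2 :=
    sq_norm_T_ge hBpsd hpospos hposmin vd horth
  have BC : ‖vg‖ ^ 2 ≤ L * ⟪vg, ve⟫ := by
    have := coco hconv hgrad hL hlip y ystar
    rw [← hvg, ← hve] at this
    exact this
  have BS : μ * ‖ve‖ ^ 2 ≤ ⟪vg, ve⟫ := by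
    have := strong_mono hμ hsc hgrad y ystar
    rw [← hvg, ← hve] at this
    exact this
  have hc : ⟪ve, vg⟫ = ⟪vg, ve⟫ := real_inner_comm _ _
  -- step 1
  have hdp2 : ‖dp‖ ^ 2 ≤ ‖vd‖ ^ 2 + 2 * κ * (⟪Matrix.toEuclideanLin B vd, ve⟫
      - κ * (‖Matrix.toEuclideanLin B vd‖ ^ 2 + ⟪Matrix.toEuclideanLin B vd, vg⟫))
      + κ ^ 2 * lamMax ^ 2 * ‖ep‖ ^ 2 := by
    rw [A2, A3]
    have := mul_le_mul_of_nonneg_left BT1 (sq_nonneg κ)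
    linarith [this]
  have key1 : (1 - κ ^ 2 * lamMax ^ 2) * ‖ep‖ ^ 2 + ‖dp‖ ^ 2
      ≤ ‖ve‖ ^ 2 - 2 * κ * ⟪vg, ve⟫ + κ ^ 2 * ‖vg‖ ^ 2
        - κ ^ 2 * ‖Matrix.toEuclideanLin B vd‖ ^ 2 + ‖vd‖ ^ 2 := by
    have heq : (1 - κ ^ 2 * lamMax ^ 2) * ‖ep‖ ^ 2 + (‖vd‖ ^ 2
        + 2 * κ * (⟪Matrix.toEuclideanLin B vd, ve⟫
          - κ * (‖Matrix.toEuclideanLin B vd‖ ^ 2 + ⟪Matrix.toEuclideanLin B vd, vg⟫))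
        + κ ^ 2 * lamMax ^ 2 * ‖ep‖ ^ 2)
        = ‖ve‖ ^ 2 - 2 * κ * ⟪vg, ve⟫ + κ ^ 2 * ‖vg‖ ^ 2
          - κ ^ 2 * ‖Matrix.toEuclideanLin B vd‖ ^ 2 + ‖vd‖ ^ 2 := by
      rw [A1, A4, A5, hc]
      ring
    linarith [hdp2, heq.le, heq.ge]
  -- step 2
  have key2 : ‖ve‖ ^ 2 - 2 * κ * ⟪vg, ve⟫ + κ ^ 2 * ‖vg‖ ^ 2
      - κ ^ 2 * ‖Matrix.toEuclideanLin B vd‖ ^ 2 + ‖vd‖ ^ 2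
      ≤ (1 - 2 * κ * μ + κ ^ 2 * L * μ) * ‖ve‖ ^ 2
        + (1 - κ ^ 2 * lamPos ^ 2) * ‖vd‖ ^ 2 := by
    have p1 : 0 ≤ (2 * κ - κ ^ 2 * L) * (⟪vg, ve⟫ - μ * ‖ve‖ ^ 2) := by
      apply mul_nonneg
      · nlinarith
      · linarith
    have p2 : κ ^ 2 * ‖vg‖ ^ 2 ≤ κ ^ 2 * (L * ⟪vg, ve⟫) :=
      mul_le_mul_of_nonneg_left BC (sq_nonneg κ)
    have p3 : κ ^ 2 * (lamPos ^ 2 * ‖vd‖ ^ 2) ≤ κ ^ 2 * ‖Matrix.toEuclideanLin B vd‖ ^ 2 :=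
      mul_le_mul_of_nonneg_left BT2 (sq_nonneg κ)
    linarith [p1, p2, p3]

  -- step 3
  have key3 : (1 - 2 * κ * μ + κ ^ 2 * L * μ) * ‖ve‖ ^ 2
      + (1 - κ ^ 2 * lamPos ^ 2) * ‖vd‖ ^ 2
      ≤ γ₀ * ((1 - κ ^ 2 * lamMax ^ 2) * ‖ve‖ ^ 2 + ‖vd‖ ^ 2) := by
    have q1 : 1 - 2 * κ * μ + κ ^ 2 * L * μ ≤ γ₀ * (1 - κ ^ 2 * lamMax ^ 2) := by
      have h1M : (0:ℝ) ≤ 1 - κ ^ 2 * lamMax ^ 2 := by linarith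
      have q0 := mul_le_mul_of_nonneg_right hγ1 h1M
      have r1 : 0 ≤ κ ^ 2 * lamMax ^ 2 * (κ * μ * (1 - κ * L)) := by
        apply mul_nonneg (by positivity)
        apply mul_nonneg (by positivity)
        linarith
      have r2 : κ * (κ * lamMax ^ 2) ≤ κ * μ := mul_le_mul_of_nonneg_left hκM.le hκ0.le
      linarith [q0, r1, r2]
    have s1 := mul_le_mul_of_nonneg_right q1 (sq_nonneg ‖ve‖)
    have s2 := mul_le_mul_of_nonneg_right hγ2 (sq_nonneg ‖vd‖)
    linarith [s1, s2]

  linarith [key1, key2, key3]
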